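/- If a Polish group G has the invariant automatic continuity property and the Bergman property, then G has the locally compact automatic continuity property. -/

import Mathlib

open Pointwise

/-- A topological group is SIN if it has a basis at `1` of conjugation-invariant
neighborhoods. -/
def IsSINGroup (H : Type*) [Group H] [TopologicalSpace H] : Prop :=
  ∀ U ∈ nhds (1 : H), ∃ V ∈ nhds (1 : H), V ⊆ U ∧
    ∀ h : H, (fun x => h * x * h⁻¹) '' V = V

/-- A topological group `G` has the invariant automatic continuity property if every
homomorphism from `G` to a SIN Polish group is continuous. -/
def InvariantACP (G : Type*) [Group G] [TopologicalSpace G] : Prop :=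
  ∀ (H : Type) [Group H] [TopologicalSpace H] [IsTopologicalGroup H] [PolishSpace H],
    IsSINGroup H → ∀ φ : G →* H, Continuous φ

/-- A topological group `G` has the locally compact automatic continuity property if
every homomorphism from `G` to a locally compact Polish group is continuous. -/
def LocallyCompactACP (G : Type*) [Group G] [TopologicalSpace G] : Prop :=
  ∀ (H : Type) [Group H] [TopologicalSpace H] [IsTopologicalGroup H] [PolishSpace H]
    [LocallyCompactSpace H], ∀ φ : G →* H, Continuous φ

/-- A group has the Bergman property if every increasing exhaustion by symmetric
subsets containing `1` has some term whose some power is the whole group. -/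
def BergmanProperty (G : Type*) [Group G] : Prop :=
  ∀ A : ℕ → Set G, (∀ n, A n ⊆ A (n + 1)) → (∀ n, (A n)⁻¹ = A n) →
    (1 : G) ∈ A 0 → (⋃ n, A n) = Set.univ →
    ∃ n k : ℕ, 1 ≤ k ∧ (A n) ^ k = Set.univ



open Pointwise

lemma isCompact_pow' {M : Type*} [Monoid M] [TopologicalSpace M] [ContinuousMul M]
    {s : Set M} (hs : IsCompact s) : ∀ k, IsCompact (s ^ k)
  | 0 => by rw [pow_zero, ← Set.singleton_one]; exact isCompact_singleton
  | (k + 1) => by rw [pow_succ]; exact (isCompact_pow' hs k).mul hs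

lemma isSIN_of_compactSpace (M : Type*) [Group M] [TopologicalSpace M] [IsTopologicalGroup M]
    [CompactSpace M] : IsSINGroup M := by
  intro U hU
  have hc : Continuous (fun p : M × M => p.1 * p.2 * p.1⁻¹) := by continuity
  have hsub : (Set.univ ×ˢ ({1} : Set M)) ⊆
      (fun p : M × M => p.1 * p.2 * p.1⁻¹) ⁻¹' interior U := by
    rintro ⟨h, x⟩ ⟨-, hx⟩
    simp only [Set.mem_singleton_iff] at hx
    subst hx
    simpa using mem_interior_iff_mem_nhds.2 hU
  obtain ⟨u, W, hu, hWopen, hsu, h1W, huW⟩ :=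
    generalized_tube_lemma isCompact_univ isCompact_singleton
      (isOpen_interior.preimage hc) hsub
  refine ⟨⋃ h : M, (fun x => h * x * h⁻¹) '' W, ?_, ?_, ?_⟩
  · have hW1 : W ∈ nhds (1 : M) := hWopen.mem_nhds (h1W rfl)
    refine Filter.mem_of_superset hW1 ?_
    intro x hx
    exact Set.mem_iUnion.2 ⟨1, x, hx, by simp⟩
  · intro x hx
    obtain ⟨h, w, hw, rfl⟩ := by simpa [Set.mem_iUnion] using hx
    exact interior_subset (huW (Set.mk_mem_prod (hsu trivial) hw))
  · intro g
    have key : ∀ g : M, (fun x => g * x * g⁻¹) ''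
        (⋃ h : M, (fun x => h * x * h⁻¹) '' W) ⊆ ⋃ h : M, (fun x => h * x * h⁻¹) '' W := by
      intro g x hx
      obtain ⟨y, hy, rfl⟩ := hx
      obtain ⟨h, w, hw, rfl⟩ := by simpa [Set.mem_iUnion] using hy
      refine Set.mem_iUnion.2 ⟨g * h, w, hw, by group⟩
    refine Set.Subset.antisymm (key g) ?_
    intro v hv
    have : g⁻¹ * v * g⁻¹⁻¹ ∈ ⋃ h : M, (fun x => h * x * h⁻¹) '' W :=
      key g⁻¹ ⟨v, hv, rfl⟩
    exact ⟨g⁻¹ * v * g⁻¹⁻¹, this, by group⟩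


theorem locallyCompactACP_of_invariantACP_of_bergman
    {G : Type*} [Group G] [TopologicalSpace G] [IsTopologicalGroup G] [PolishSpace G]
    (hinv : InvariantACP G) (hB : BergmanProperty G) :
    LocallyCompactACP G := by
  intro H _ _ _ _ _ φ
  have C := CompactExhaustion.choice H
  set K : ℕ → Set H := fun n => (C n ∪ (C n)⁻¹) ∪ {1} with hK
  have hKsymm : ∀ n, (K n)⁻¹ = K n := by
    intro n
    simp [hK, Set.union_inv, Set.union_comm (C n) (C n)⁻¹]
  have hKcomp : ∀ n, IsCompact (K n) := fun n =>
    ((C.isCompact n).union (C.isCompact n).inv).union isCompact_singleton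
  set A : ℕ → Set G := fun n => φ ⁻¹' K n with hA
  obtain ⟨n, k, hk1, hAk⟩ := hB A
    (fun n => Set.preimage_mono (Set.union_subset_union
      (Set.union_subset_union (C.subset_succ n)
        (Set.inv_subset_inv.2 (C.subset_succ n))) Set.Subset.rfl))
    (by
      intro n
      ext x
      simp only [hA, Set.mem_inv, Set.mem_preimage, map_inv]
      rw [← Set.mem_inv, hKsymm])
    (by simp [hA, hK])
    (by
      ext g
      simp only [Set.mem_iUnion, Set.mem_univ, iff_true, hA, Set.mem_preimage]
      obtain ⟨m, hm⟩ := C.exists_mem (φ g)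
      exact ⟨m, Set.mem_union_left _ (Set.mem_union_left _ hm)⟩)
  have hrange : Set.range φ ⊆ K n ^ k := by
    rw [← Set.image_univ, ← hAk, Set.image_pow]
    exact Set.pow_subset_pow_left (Set.image_preimage_subset _ _)
  have hPcomp : IsCompact (K n ^ k) := isCompact_pow' (hKcomp n) k
  set M := φ.range.topologicalClosure with hM
  have hMclosed : IsClosed (M : Set H) := Subgroup.isClosed_topologicalClosure _
  have hMcomp : IsCompact (M : Set H) :=
    hPcomp.of_isClosed_subset hMclosed
      (closure_minimal (by exact_mod_cast hrange) hPcomp.isClosed)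
  haveI : CompactSpace ↥M := isCompact_iff_compactSpace.mp hMcomp
  haveI : PolishSpace ↥M := hMclosed.polishSpace
  set φ' : G →* ↥M := φ.codRestrict M (fun g => subset_closure ⟨g, rfl⟩) with hφ'
  have hcont : Continuous φ' := hinv ↥M (isSIN_of_compactSpace ↥M) φ'
  have : Continuous fun g => (φ' g : H) := continuous_subtype_val.comp hcont
  exact this
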